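/- For 1 ≤ r ≤ ⌊n/2⌋, the subspace 𝔪_r of strictly upper triangular n×n matrices spanned by the elementary matrices e_{r,j} and e_{i,n-r+1} for r < i,j < n-r+1 together with e_{r,n-r+1} is a Lie subalgebra, its derived algebra [𝔪_r, 𝔪_r] is contained in the span of e_{r,n-r+1}, and its center equals the span of e_{r,n-r+1} when r < n/2. -/

import Mathlib

open Matrix

/-- Elementary matrix `e_{i,j}` (0-based indices). -/
def elemMat (n : ℕ) (i j : Fin n) : Matrix (Fin n) (Fin n) ℝ :=
  Matrix.single i j 1

/-- The spanning set of the Heisenberg subalgebra `𝔪_r` (with `r` a 1-based index):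
the elementary matrices `e_{r,j}` for `r < j < n-r+1`, the `e_{i,n-r+1}` for
`r < i < n-r+1`, and `e_{r,n-r+1}`.  In 0-based indices these are the positions in
row `r-1` with column in `(r-1, n-r]`, together with the positions in column `n-r`
with row in `(r-1, n-r)`. -/
def mSet (n r : ℕ) : Set (Matrix (Fin n) (Fin n) ℝ) :=
  {X | ∃ i j : Fin n,
    (((i : ℕ) = r - 1 ∧ r - 1 < (j : ℕ) ∧ (j : ℕ) ≤ n - r) ∨
     ((j : ℕ) = n - r ∧ r - 1 < (i : ℕ) ∧ (i : ℕ) < n - r)) ∧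
    X = elemMat n i j}

/-- The subspace `𝔪_r`. -/
def mAlg (n r : ℕ) : Submodule ℝ (Matrix (Fin n) (Fin n) ℝ) :=
  Submodule.span ℝ (mSet n r)

/-- bracket of spans lands in a submodule if brackets of generators do -/
lemma span_bracket {n : ℕ} {s : Set (Matrix (Fin n) (Fin n) ℝ)}
    {S : Submodule ℝ (Matrix (Fin n) (Fin n) ℝ)}
    (h : ∀ x ∈ s, ∀ y ∈ s, x * y - y * x ∈ S) :
    ∀ X ∈ Submodule.span ℝ s, ∀ Y ∈ Submodule.span ℝ s, X * Y - Y * X ∈ S := by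
  intro X hX Y hY
  induction hX, hY using Submodule.span_induction₂ with
  | mem_mem x y hx hy => exact h x hx y hy
  | zero_left y hy => simp
  | zero_right x hx => simp
  | add_left x y z _ _ _ h1 h2 =>
      have : (x + y) * z - z * (x + y) = (x * z - z * x) + (y * z - z * y) := by noncomm_ring
      rw [this]; exact S.add_mem h1 h2
  | add_right x y z _ _ _ h1 h2 =>
      have : x * (y + z) - (y + z) * x = (x * y - y * x) + (x * z - z * x) := by noncomm_ring
      rw [this]; exact S.add_mem h1 h2
  | smul_left c x y _ _ h1 =>
      have : (c • x) * y - y * (c • x) = c • (x * y - y * x) := by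
        rw [smul_mul_assoc, mul_smul_comm, smul_sub]
      rw [this]; exact S.smul_mem c h1
  | smul_right c x y _ _ h1 =>
      have : x * (c • y) - (c • y) * x = c • (x * y - y * x) := by
        rw [smul_mul_assoc, mul_smul_comm, smul_sub]
      rw [this]; exact S.smul_mem c h1

/-- if `Z` commutes with all generators it commutes with the span -/
lemma span_comm {n : ℕ} {s : Set (Matrix (Fin n) (Fin n) ℝ)}
    {Z : Matrix (Fin n) (Fin n) ℝ} (h : ∀ x ∈ s, Z * x = x * Z) :
    ∀ Y ∈ Submodule.span ℝ s, Z * Y - Y * Z = 0 := by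
  intro Y hY
  induction hY using Submodule.span_induction with
  | mem x hx => rw [h x hx, sub_self]
  | zero => simp
  | add x y _ _ h1 h2 =>
      have e : Z * (x + y) - (x + y) * Z = (Z * x - x * Z) + (Z * y - y * Z) := by noncomm_ring
      rw [e, h1, h2, add_zero]
  | smul c x _ h1 =>
      have e : Z * (c • x) - (c • x) * Z = c • (Z * x - x * Z) := by
        rw [mul_smul_comm, smul_mul_assoc, smul_sub]
      rw [e, h1, smul_zero]

/-- entries of elements of `mAlg` vanish outside the allowed positions -/
lemma mAlg_apply_eq_zero {n r : ℕ} {X : Matrix (Fin n) (Fin n) ℝ} (hX : X ∈ mAlg n r)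
    (i j : Fin n)
    (h : ¬(((i : ℕ) = r - 1 ∧ r - 1 < (j : ℕ) ∧ (j : ℕ) ≤ n - r) ∨
        ((j : ℕ) = n - r ∧ r - 1 < (i : ℕ) ∧ (i : ℕ) < n - r))) : X i j = 0 := by
  induction hX using Submodule.span_induction with
  | mem x hx =>
      obtain ⟨i', j', hcond, rfl⟩ := hx
      refine Matrix.single_apply_of_ne _ _ _ _ _ ?_
      rintro ⟨rfl, rfl⟩
      exact h hcond
  | zero => simp
  | add x y _ _ h1 h2 => simp [Matrix.add_apply, h1, h2]
  | smul c x _ h1 => simp [Matrix.smul_apply, h1]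

/-- brackets of generators lie in the span of `e_{r,n-r+1}` -/
lemma gen_bracket (n r : ℕ) (hr : 1 ≤ r) (hrn : 2 * r ≤ n) :
    ∀ x ∈ mSet n r, ∀ y ∈ mSet n r,
      x * y - y * x ∈
        Submodule.span ℝ {elemMat n ⟨r - 1, by have := hr; omega⟩ ⟨n - r, by have := hr; omega⟩} := by
  rintro x ⟨i, j, hij, rfl⟩ y ⟨k, l, hkl, rfl⟩
  unfold elemMat
  rcases hij with ⟨hi, hj1, hj2⟩ | ⟨hj, hi1, hi2⟩ <;>
    rcases hkl with ⟨hk, hl1, hl2⟩ | ⟨hl, hk1, hk2⟩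
  · -- row/row : both products vanish
    have hjk : j ≠ k := fun h => absurd (congrArg Fin.val h) (by omega)
    have hli : l ≠ i := fun h => absurd (congrArg Fin.val h) (by omega)
    rw [Matrix.single_mul_single_of_ne _ _ _ _ hjk, Matrix.single_mul_single_of_ne _ _ _ _ hli,
      sub_zero]
    exact Submodule.zero_mem _
  · -- row/col
    have hli : l ≠ i := fun h => absurd (congrArg Fin.val h) (by omega)
    rw [Matrix.single_mul_single_of_ne _ _ _ _ hli, sub_zero]
    by_cases hjk : j = k
    · subst hjk
      rw [Matrix.single_mul_single_same]
      have h1 : i = (⟨r - 1, by omega⟩ : Fin n) := Fin.ext (by simpa using hi)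
      have h2 : l = (⟨n - r, by omega⟩ : Fin n) := Fin.ext (by simpa using hl)
      rw [h1, h2]
      simpa using Submodule.mem_span_singleton_self _
    · rw [Matrix.single_mul_single_of_ne _ _ _ _ hjk]
      exact Submodule.zero_mem _
  · -- col/row
    have hjk : j ≠ k := fun h => absurd (congrArg Fin.val h) (by omega)
    rw [Matrix.single_mul_single_of_ne _ _ _ _ hjk, zero_sub]
    by_cases hli : l = i
    · subst hli
      rw [Matrix.single_mul_single_same]
      have h1 : k = (⟨r - 1, by omega⟩ : Fin n) := Fin.ext (by simpa using hk)
      have h2 : j = (⟨n - r, by omega⟩ : Fin n) := Fin.ext (by simpa using hj)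
      rw [h1, h2]
      refine neg_mem ?_
      simpa using Submodule.mem_span_singleton_self _
    · rw [Matrix.single_mul_single_of_ne _ _ _ _ hli, neg_zero]
      exact Submodule.zero_mem _
  · -- col/col
    have hjk : j ≠ k := fun h => absurd (congrArg Fin.val h) (by omega)
    have hli : l ≠ i := fun h => absurd (congrArg Fin.val h) (by omega)
    rw [Matrix.single_mul_single_of_ne _ _ _ _ hjk, Matrix.single_mul_single_of_ne _ _ _ _ hli,
      sub_zero]
    exact Submodule.zero_mem _

/-- for `1 ≤ r ≤ ⌊n/2⌋`, `𝔪_r` is a Lie subalgebra of `gl(n,ℝ)`, its derived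
algebra `[𝔪_r, 𝔪_r]` is contained in the span of `e_{r, n-r+1}`, and (when `r < n/2`)
its center is exactly the span of `e_{r, n-r+1}`. -/
theorem mAlg_subalgebra_derived_center (n r : ℕ) (hr : 1 ≤ r) (hrn : 2 * r ≤ n) :
    (∀ X ∈ mAlg n r, ∀ Y ∈ mAlg n r, X * Y - Y * X ∈ mAlg n r) ∧
    (∀ X ∈ mAlg n r, ∀ Y ∈ mAlg n r,
      X * Y - Y * X ∈
        Submodule.span ℝ {elemMat n ⟨r - 1, by omega⟩ ⟨n - r, by omega⟩}) ∧
    (2 * r < n →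
      ∀ X : Matrix (Fin n) (Fin n) ℝ,
        (X ∈ mAlg n r ∧ ∀ Y ∈ mAlg n r, X * Y - Y * X = 0) ↔
          X ∈ Submodule.span ℝ {elemMat n ⟨r - 1, by omega⟩ ⟨n - r, by omega⟩}) := by
  set a : Fin n := ⟨r - 1, by omega⟩ with ha
  set b : Fin n := ⟨n - r, by omega⟩ with hb
  have hbr : ∀ X ∈ mAlg n r, ∀ Y ∈ mAlg n r,
      X * Y - Y * X ∈ Submodule.span ℝ {elemMat n a b} :=
    span_bracket (gen_bracket n r hr hrn)
  have hEmem : elemMat n a b ∈ mSet n r :=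
    ⟨a, b, Or.inl ⟨rfl, by simp [ha, hb]; omega⟩, rfl⟩
  have hle : Submodule.span ℝ {elemMat n a b} ≤ mAlg n r :=
    Submodule.span_le.mpr (Set.singleton_subset_iff.mpr (Submodule.subset_span hEmem))
  refine ⟨fun X hX Y hY => hle (hbr X hX Y hY), hbr, ?_⟩
  intro hlt X
  constructor
  · rintro ⟨hX, hc⟩
    rw [Submodule.mem_span_singleton]
    refine ⟨X a b, ?_⟩
    ext i j
    rw [Matrix.smul_apply]
    by_cases hij : i = a ∧ j = b
    · obtain ⟨rfl, rfl⟩ := hij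
      simp [elemMat]
    · rw [show elemMat n a b i j = 0 from
        Matrix.single_apply_of_ne _ _ _ _ _ (fun h => hij ⟨h.1.symm, h.2.symm⟩),
        smul_zero]
      by_cases hpos : ((i : ℕ) = r - 1 ∧ r - 1 < (j : ℕ) ∧ (j : ℕ) ≤ n - r) ∨
          ((j : ℕ) = n - r ∧ r - 1 < (i : ℕ) ∧ (i : ℕ) < n - r)
      · rcases hpos with ⟨hi, hj1, hj2⟩ | ⟨hj, hi1, hi2⟩
        · -- row case, with j ≠ b necessarily
          have hia : i = a := Fin.ext (by simpa [ha] using hi)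
          have hjb : (j : ℕ) < n - r := by
            rcases lt_or_eq_of_le hj2 with h | h
            · exact h
            · exact absurd ⟨hia, Fin.ext (by simpa [hb] using h)⟩ hij
          have hYmem : elemMat n j b ∈ mAlg n r :=
            Submodule.subset_span ⟨j, b, Or.inr ⟨by simp [hb], by omega, by omega⟩, rfl⟩
          have h0 := hc _ hYmem
          have h0' : (X * elemMat n j b - elemMat n j b * X) a b = 0 := by rw [h0]; simp
          rw [Matrix.sub_apply] at h0'
          rw [show elemMat n j b = Matrix.single j b (1:ℝ) from rfl] at h0'
          rw [Matrix.mul_single_apply_same, mul_one,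
            Matrix.single_mul_apply_of_ne _ _ _ _ _
              (fun h => absurd (congrArg Fin.val h) (by simp [ha]; omega)),
            sub_zero] at h0'
          rw [hia]; exact h0'.symm
        · -- column case
          have hjb : j = b := Fin.ext (by simpa [hb] using hj)
          have hYmem : elemMat n a i ∈ mAlg n r :=
            Submodule.subset_span ⟨a, i, Or.inl ⟨by simp [ha], by omega, by omega⟩, rfl⟩
          have h0 := hc _ hYmem
          have h0' : (X * elemMat n a i - elemMat n a i * X) a b = 0 := by rw [h0]; simp
          rw [Matrix.sub_apply] at h0'
          rw [show elemMat n a i = Matrix.single a i (1:ℝ) from rfl] at h0'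
          rw [Matrix.single_mul_apply_same, one_mul,
            Matrix.mul_single_apply_of_ne _ _ _ _ _
              (fun h => absurd (congrArg Fin.val h) (by simp [hb]; omega)),
            zero_sub, neg_eq_zero] at h0'
          rw [hjb]; exact h0'.symm
      · exact (mAlg_apply_eq_zero hX i j hpos).symm
  · intro hs
    refine ⟨hle hs, ?_⟩
    rw [Submodule.mem_span_singleton] at hs
    obtain ⟨c, rfl⟩ := hs
    refine span_comm ?_
    rintro x ⟨i, j, hcond, rfl⟩
    have h1 : elemMat n a b * elemMat n i j = 0 := by
      refine Matrix.single_mul_single_of_ne _ _ _ _ ?_ _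
      rcases hcond with ⟨hi, _, _⟩ | ⟨_, _, hi⟩ <;>
        exact fun h => absurd (congrArg Fin.val h) (by simp [hb]; omega)
    have h2 : elemMat n i j * elemMat n a b = 0 := by
      refine Matrix.single_mul_single_of_ne _ _ _ _ ?_ _
      rcases hcond with ⟨_, hj, _⟩ | ⟨hj, _, _⟩ <;>
        exact fun h => absurd (congrArg Fin.val h) (by simp [ha]; omega)
    rw [smul_mul_assoc, mul_smul_comm, h1, h2]
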